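/- arXiv:2208.04502 — 5 statements merged into one kernel-verified Lean document; each statement's English description precedes it below -/
import Mathlib

section
/- Let z1, z2 be points in the open unit disk D with |z1| ≤ |z2|. Then (1/2)·d(z1,z2) ≤ |z2 − z1|/(1 − |z2|), where d is the hyperbolic distance in the Poincaré disk. -/
open Real Complex

/-- Hyperbolic (Poincaré) distance on the unit disk, via
`sinh (d z w / 2) = |z - w| / sqrt ((1 - |z|^2) * (1 - |w|^2))`. -/
noncomputable def hypDist (z w : ℂ) : ℝ :=
  2 * Real.arsinh (‖z - w‖ /
    Real.sqrt ((1 - ‖z‖ ^ 2) * (1 - ‖w‖ ^ 2)))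

lemma arsinh_le_self' {x : ℝ} (hx : 0 ≤ x) : Real.arsinh x ≤ x := by
  rw [← Real.sinh_le_sinh, Real.sinh_arsinh]
  exact Real.self_le_sinh_iff.mpr hx

theorem half_hypDist_le_ratio (z1 z2 : ℂ)
    (h1 : ‖z1‖ < 1) (h2 : ‖z2‖ < 1)
    (hle : ‖z1‖ ≤ ‖z2‖) :
    (1 / 2) * hypDist z1 z2 ≤ ‖z2 - z1‖ / (1 - ‖z2‖) := by
  have h2' : (0:ℝ) < 1 - ‖z2‖ := by linarith
  have h1sq : (0:ℝ) < 1 - ‖z1‖ ^ 2 := by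
    have := norm_nonneg z1; nlinarith
  have h2sq : (0:ℝ) < 1 - ‖z2‖ ^ 2 := by
    have := norm_nonneg z2; nlinarith
  have habs : ‖z1 - z2‖ = ‖z2 - z1‖ := by
    exact norm_sub_rev _ _
  rw [hypDist, habs]
  have hx0 : (0:ℝ) ≤ ‖z2 - z1‖ /
      Real.sqrt ((1 - ‖z1‖ ^ 2) * (1 - ‖z2‖ ^ 2)) := by
    positivity
  calc (1/2) * (2 * Real.arsinh (‖z2 - z1‖ /
        Real.sqrt ((1 - ‖z1‖ ^ 2) * (1 - ‖z2‖ ^ 2))))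
      = Real.arsinh (‖z2 - z1‖ /
        Real.sqrt ((1 - ‖z1‖ ^ 2) * (1 - ‖z2‖ ^ 2))) := by ring
    _ ≤ ‖z2 - z1‖ /
        Real.sqrt ((1 - ‖z1‖ ^ 2) * (1 - ‖z2‖ ^ 2)) := arsinh_le_self' hx0
    _ ≤ ‖z2 - z1‖ / (1 - ‖z2‖) := ?_
  apply div_le_div_of_nonneg_left (norm_nonneg _) h2'
  rw [show (1 - ‖z2‖) = Real.sqrt ((1 - ‖z2‖)^2) by
      rw [Real.sqrt_sq h2'.le]]
  apply Real.sqrt_le_sqrt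
  have hz2 : ‖z2‖ ≥ 0 := norm_nonneg z2
  have hz1 : ‖z1‖ ≥ 0 := norm_nonneg z1
  have e1 : (1 - ‖z2‖)^2 ≤ (1 - ‖z2‖^2) * (1 - ‖z2‖^2) := by
    nlinarith
  have e2 : (1 - ‖z2‖^2) * (1 - ‖z2‖^2) ≤
      (1 - ‖z1‖^2) * (1 - ‖z2‖^2) := by
    nlinarith [mul_le_mul hle hle hz1 hz2]
  linarith
end

section
/- Suppose z1, z2 are distinct points in the Poincaré disk D with hyperbolic distance d(z1,z2) ≤ 1. Let γ be the hyperbolic geodesic arc from z1 to z2 and γ' the Euclidean segment from z1 to z2. Then the angle between γ and γ' at z1 is less than 2·d(z1,z2). -/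
open Real Complex

private lemma sinh_le_three_half (x : ℝ) (hx0 : 0 ≤ x) (hx1 : x ≤ 1) :
    Real.sinh x ≤ 3 / 2 * x := by
  have h1 : |Real.exp x - 1 - x| ≤ x ^ 2 :=
    Real.abs_exp_sub_one_sub_id_le (by rwa [_root_.abs_of_nonneg hx0])
  have h1' : Real.exp x - 1 - x ≤ x ^ 2 := (abs_le.mp h1).2
  have h2 : 1 - x ≤ Real.exp (-x) := by
    have := Real.add_one_le_exp (-x); linarith
  rw [Real.sinh_eq]
  nlinarith [sq_nonneg x]

/-- If the hyperbolic geodesic from z1 to z2 lies on a Euclidean circle centered at zs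
(orthogonal to the unit circle), then the angle between the geodesic and the Euclidean
segment at z1, which equals arcsin(|z2 - z1| / (2 |zs - z1|)), is less than
2 * hypDist z1 z2. -/
theorem angle_geodesic_segment_lt (z1 z2 zs : ℂ)
    (h1 : ‖z1‖ < 1) (h2 : ‖z2‖ < 1) (hne : z1 ≠ z2)
    (hd : hypDist z1 z2 ≤ 1)
    (hon1 : ‖z1 - zs‖ = ‖z2 - zs‖)
    (horth : ‖zs‖ ^ 2 = 1 + ‖z1 - zs‖ ^ 2) :
    Real.arcsin (‖z2 - z1‖ / (2 * ‖zs - z1‖))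
      < 2 * hypDist z1 z2 := by
  set r : ℝ := ‖z1 - zs‖ with hr
  set A : ℝ := ‖z1 - z2‖ with hA
  have hA21 : ‖z2 - z1‖ = A := norm_sub_rev z2 z1
  have hrs1 : ‖zs - z1‖ = r := norm_sub_rev zs z1
  have hApos : 0 < A := by
    rw [hA]
    exact norm_pos_iff.mpr (sub_ne_zero.mpr hne)
  -- basic normSq identities
  have hn1 : Complex.normSq (z1 - zs) = r ^ 2 := by rw [hr, Complex.sq_norm]
  have hn2 : Complex.normSq (z2 - zs) = r ^ 2 := by rw [hon1, Complex.sq_norm]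
  have hns : Complex.normSq zs = 1 + r ^ 2 := by
    rw [← Complex.sq_norm]; exact horth
  have hsub1 := Complex.normSq_sub z1 zs
  have hsub2 := Complex.normSq_sub z2 zs
  have hre1 : 2 * (z1 * (starRingEnd ℂ) zs).re = 1 + Complex.normSq z1 := by
    rw [hn1, hns] at hsub1; linarith
  have hre2 : 2 * (z2 * (starRingEnd ℂ) zs).re = 1 + Complex.normSq z2 := by
    rw [hn2, hns] at hsub2; linarith
  have hrpos : 0 < r := by
    rcases lt_or_eq_of_le (norm_nonneg (z1 - zs)) with h | h
    · exact h
    · exfalso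
      have hz : z1 = zs := by
        have := norm_eq_zero.mp h.symm
        rwa [sub_eq_zero] at this
      have habs : ‖zs‖ ^ 2 < 1 := by
        rw [← hz]; nlinarith [norm_nonneg z1]
      have hr0 : (0:ℝ) ≤ r ^ 2 := sq_nonneg r
      rw [horth] at habs; linarith
  -- key geometric bound : 1 - |z|^2 ≤ 2r
  have key : ∀ z : ℂ, ‖z‖ < 1 → Complex.normSq (z - zs) = r ^ 2 →
      2 * (z * (starRingEnd ℂ) zs).re = 1 + Complex.normSq z →
      1 - ‖z‖ ^ 2 ≤ 2 * r := by
    intro z hz hnz hrez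
    have e1 : 1 - Complex.normSq z = 2 * (z * (starRingEnd ℂ) (zs - z)).re := by
      have heq : z * (starRingEnd ℂ) (zs - z)
          = z * (starRingEnd ℂ) zs - (Complex.normSq z : ℂ) := by
        rw [map_sub, mul_sub, Complex.mul_conj]
      rw [heq, Complex.sub_re, Complex.ofReal_re]; linarith
    have e2 : (z * (starRingEnd ℂ) (zs - z)).re
        ≤ ‖z‖ * ‖zs - z‖ := by
      calc (z * (starRingEnd ℂ) (zs - z)).re
          ≤ ‖z * (starRingEnd ℂ) (zs - z)‖ := Complex.re_le_norm _
        _ = ‖z‖ * ‖zs - z‖ := by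
            rw [norm_mul, Complex.norm_conj]
    have e3 : ‖zs - z‖ = r := by
      rw [norm_sub_rev, ← Real.sqrt_sq hrpos.le, ← hnz, Complex.norm_def]
    rw [Complex.sq_norm]
    rw [e3] at e2
    nlinarith [norm_nonneg z]
  have k1 : 1 - ‖z1‖ ^ 2 ≤ 2 * r := key z1 h1 hn1 hre1
  have k2 : 1 - ‖z2‖ ^ 2 ≤ 2 * r := key z2 h2 hn2 hre2
  have hp1 : 0 < 1 - ‖z1‖ ^ 2 := by nlinarith [norm_nonneg z1]
  have hp2 : 0 < 1 - ‖z2‖ ^ 2 := by nlinarith [norm_nonneg z2]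
  set B : ℝ := Real.sqrt ((1 - ‖z1‖ ^ 2) * (1 - ‖z2‖ ^ 2)) with hB
  have hBpos : 0 < B := Real.sqrt_pos.mpr (by positivity)
  have hB2r : B ≤ 2 * r := by
    rw [hB]
    calc Real.sqrt ((1 - ‖z1‖ ^ 2) * (1 - ‖z2‖ ^ 2))
        ≤ Real.sqrt ((2 * r) * (2 * r)) := by
          apply Real.sqrt_le_sqrt
          exact mul_le_mul k1 k2 hp2.le (by linarith)
      _ = 2 * r := Real.sqrt_mul_self (by linarith)
  set t : ℝ := A / B with ht
  have htpos : 0 < t := div_pos hApos hBpos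
  have hdeq : hypDist z1 z2 = 2 * Real.arsinh t := rfl
  set d : ℝ := hypDist z1 z2 with hdd
  have hdpos : 0 < d := by
    rw [hdeq]
    have := Real.arsinh_pos_iff.mpr htpos
    linarith
  have hst : A / (2 * r) ≤ t := by
    rw [ht]
    exact div_le_div_of_nonneg_left hApos.le hBpos hB2r
  clear_value r A B t d
  have hhalf : d / 2 = Real.arsinh t := by rw [hdeq]; ring
  have hsinh : Real.sinh (d / 2) = t := by rw [hhalf, Real.sinh_arsinh]
  have hd2 : d / 2 ≤ 1 := by linarith
  have htle : t ≤ 3 / 2 * (d / 2) := by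
    rw [← hsinh]
    exact sinh_le_three_half _ (by linarith) hd2
  have hs_nonneg : 0 ≤ A / (2 * r) := by positivity
  have hs_le_one : A / (2 * r) ≤ 1 := by
    have : t ≤ 3 / 4 := by linarith
    linarith
  -- arcsin s ≤ (π/2) s
  have harcsin : Real.arcsin (A / (2 * r)) ≤ π / 2 * (A / (2 * r)) := by
    have h0 : 0 ≤ Real.arcsin (A / (2 * r)) := Real.arcsin_nonneg.mpr hs_nonneg
    have hpi : Real.arcsin (A / (2 * r)) ≤ π / 2 := Real.arcsin_le_pi_div_two _
    have hms := Real.mul_le_sin h0 hpi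
    rw [Real.sin_arcsin (by linarith) hs_le_one] at hms
    have hpipos := Real.pi_pos
    rw [div_mul_eq_mul_div, div_le_iff₀ hpipos] at hms
    linarith
  have hpi4 : π < 4 := by
    have := Real.pi_lt_d2; norm_num at this; linarith
  calc Real.arcsin (‖z2 - z1‖ / (2 * ‖zs - z1‖))
      = Real.arcsin (A / (2 * r)) := by rw [hA21, hrs1]
    _ ≤ π / 2 * (A / (2 * r)) := harcsin
    _ ≤ π / 2 * t := mul_le_mul_of_nonneg_left hst (by positivity)
    _ ≤ π / 2 * (3 / 2 * (d / 2)) := mul_le_mul_of_nonneg_left htle (by positivity)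
    _ < 2 * d := by
        have := mul_lt_mul_of_pos_right hpi4 hdpos
        linarith
end

section
/- Let b ∈ ℝ and let z, w be points in D such that e^b·z and e^b·w are also in D. Set u_z = b + log((1−|z|²)/(1−|e^b z|²)) and u_w = b + log((1−|w|²)/(1−|e^b w|²)). Then sinh(d(e^b z, e^b w)/2) = e^{(u_z+u_w)/2} sinh(d(z,w)/2). -/
open Real Complex

lemma exp_half_log {x : ℝ} (hx : 0 < x) : Real.exp (Real.log x / 2) = Real.sqrt x := by
  rw [← Real.log_sqrt hx.le, Real.exp_log (Real.sqrt_pos.mpr hx)]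

theorem scaling_discrete_conformal (b : ℝ) (z w : ℂ)
    (hz : ‖z‖ < 1) (hw : ‖w‖ < 1)
    (hz' : ‖Real.exp b • z‖ < 1)
    (hw' : ‖Real.exp b • w‖ < 1) :
    Real.sinh (hypDist (Real.exp b • z) (Real.exp b • w) / 2)
      = Real.exp (((b + Real.log ((1 - ‖z‖ ^ 2) /
              (1 - ‖Real.exp b • z‖ ^ 2)))
          + (b + Real.log ((1 - ‖w‖ ^ 2) /
              (1 - ‖Real.exp b • w‖ ^ 2)))) / 2)
        * Real.sinh (hypDist z w / 2) := by
  have hs : ∀ v : ℂ, ‖Real.exp b • v‖ = Real.exp b * ‖v‖ := by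
    intro v
    rw [norm_smul, Real.norm_eq_abs, abs_of_pos (Real.exp_pos b)]
  simp only [hs] at hz' hw' ⊢
  have hp : 0 < 1 - ‖z‖ ^ 2 := by nlinarith [norm_nonneg z]
  have hq : 0 < 1 - ‖w‖ ^ 2 := by nlinarith [norm_nonneg w]
  have hp' : 0 < 1 - (Real.exp b * ‖z‖) ^ 2 := by
    nlinarith [mul_nonneg (Real.exp_pos b).le (norm_nonneg z)]
  have hq' : 0 < 1 - (Real.exp b * ‖w‖) ^ 2 := by
    nlinarith [mul_nonneg (Real.exp_pos b).le (norm_nonneg w)]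
  set p := 1 - ‖z‖ ^ 2
  set q := 1 - ‖w‖ ^ 2
  set p' := 1 - (Real.exp b * ‖z‖) ^ 2
  set q' := 1 - (Real.exp b * ‖w‖) ^ 2
  have habs : ‖Real.exp b • z - Real.exp b • w‖
      = Real.exp b * ‖z - w‖ := by
    rw [← smul_sub, norm_smul, Real.norm_eq_abs,
      abs_of_pos (Real.exp_pos b)]
  have half : ∀ x : ℝ, 2 * x / 2 = x := fun x => by ring
  simp only [hypDist, hs, half, habs]
  rw [Real.sinh_arsinh, Real.sinh_arsinh]
  have hlog : ((b + Real.log (p / p')) + (b + Real.log (q / q'))) / 2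
      = b + (Real.log (p / p') / 2 + Real.log (q / q') / 2) := by ring
  rw [hlog, Real.exp_add, Real.exp_add, exp_half_log (div_pos hp hp'),
    exp_half_log (div_pos hq hq')]
  rw [Real.sqrt_div hp.le, Real.sqrt_div hq.le, Real.sqrt_mul hp'.le, Real.sqrt_mul hp.le]
  have h1 : Real.sqrt p ≠ 0 := (Real.sqrt_pos.mpr hp).ne'
  have h2 : Real.sqrt q ≠ 0 := (Real.sqrt_pos.mpr hq).ne'
  have h3 : Real.sqrt p' ≠ 0 := (Real.sqrt_pos.mpr hp').ne'
  have h4 : Real.sqrt q' ≠ 0 := (Real.sqrt_pos.mpr hq').ne'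
  field_simp
  rw [show (1 - rexp b ^ 2 * ‖w‖ ^ 2) = q' by simp only [q', mul_pow],
    show (1 - ‖w‖ ^ 2) = q from rfl, mul_div_cancel_right₀ _ h4, mul_div_cancel_right₀ _ h2]
end

section
/- Let ε ∈ (0,1] and let z_i'', z_j'', z_k'' ∈ D form a Euclidean triangle with all inner angles at least ε/2. If the hyperbolic distance d(z_i'', z_j'') ≤ ε/16 and |z_i''| ≤ |z_j''| (so Lemma bounds apply), then d(z_j'', z_k'') ≤ (32/ε)·d(z_i'', z_j'') ≤ 2. -/
open Real Complex

open EuclideanGeometry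

lemma convexOn_sinh' : ConvexOn ℝ (Set.Ici (0:ℝ)) Real.sinh := by
  apply convexOn_of_deriv2_nonneg (convex_Ici 0) Real.continuous_sinh.continuousOn
    Real.differentiable_sinh.differentiableOn
  · rw [Real.deriv_sinh]
    exact Real.differentiable_cosh.differentiableOn
  · intro x hx
    rw [interior_Ici] at hx
    rw [show deriv^[2] Real.sinh = Real.sinh by
      rw [Function.iterate_succ_apply', Function.iterate_one, Real.deriv_sinh, Real.deriv_cosh]]
    exact Real.sinh_nonneg_iff.2 hx.le

lemma mul_sinh_le' (t l : ℝ) (ht : 0 ≤ t) (hl : 1 ≤ l) : l * Real.sinh t ≤ Real.sinh (l * t) := by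
  have hl0 : 0 < l := lt_of_lt_of_le one_pos hl
  have ha : (0:ℝ) ≤ 1 - 1/l := by
    rw [sub_nonneg, div_le_one hl0]; exact hl
  have hb : (0:ℝ) ≤ 1/l := by positivity
  have hab : (1 - 1/l) + 1/l = 1 := by ring
  have hmem0 : (0:ℝ) ∈ Set.Ici (0:ℝ) := Set.self_mem_Ici
  have hmem : l * t ∈ Set.Ici (0:ℝ) := Set.mem_Ici.2 (mul_nonneg hl0.le ht)
  have h := convexOn_sinh'.2 hmem0 hmem ha hb hab
  simp only [smul_eq_mul, mul_zero, zero_add, Real.sinh_zero] at h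
  have heq : (1/l) * (l * t) = t := by field_simp
  rw [heq] at h
  calc l * Real.sinh t ≤ l * (1/l * Real.sinh (l*t)) :=
        mul_le_mul_of_nonneg_left h hl0.le
    _ = Real.sinh (l*t) := by field_simp

lemma arsinh_mul_le' (x l : ℝ) (hx : 0 ≤ x) (hl : 1 ≤ l) :
    Real.arsinh (l * x) ≤ l * Real.arsinh x := by
  have h1 : l * x ≤ Real.sinh (l * Real.arsinh x) := by
    have := mul_sinh_le' (Real.arsinh x) l (Real.arsinh_nonneg_iff.2 hx) hl
    rwa [Real.sinh_arsinh] at this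
  calc Real.arsinh (l * x) ≤ Real.arsinh (Real.sinh (l * Real.arsinh x)) :=
        Real.arsinh_le_arsinh.2 h1
    _ = l * Real.arsinh x := Real.arsinh_sinh _

lemma sinh_le_div' (x : ℝ) (h0 : 0 ≤ x) (h1 : x < 1) : Real.sinh x ≤ x / (1 - x) := by
  have hpos : 0 < 1 - x := by linarith
  have he1 : 1 - x ≤ (Real.exp x)⁻¹ := by
    rw [← Real.exp_neg]; nlinarith [Real.add_one_le_exp (-x)]
  have hy : 0 < Real.exp x := Real.exp_pos x
  have hinv : Real.exp x * (Real.exp x)⁻¹ = 1 := mul_inv_cancel₀ (ne_of_gt hy)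
  have he2 : Real.exp x ≤ 1 / (1 - x) := by
    rw [le_div_iff₀ hpos]; nlinarith
  have he3 : 1 - x ≤ Real.exp (-x) := by nlinarith [Real.add_one_le_exp (-x)]
  rw [Real.sinh_eq, div_le_div_iff₀ (by norm_num) hpos]
  nlinarith [he2, he3]

lemma sine_law' (zi zj zk : ℂ) (hik : zi ≠ zk) :
    Real.sin (EuclideanGeometry.angle zi zk zj) * ‖zj - zk‖
      = Real.sin (EuclideanGeometry.angle zj zi zk) * ‖zj - zi‖ := by
  set u := zi - zk with hu
  set w := zj - zk with hw
  have hA1 : EuclideanGeometry.angle zi zk zj = InnerProductGeometry.angle u w := by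
    rw [EuclideanGeometry.angle, vsub_eq_sub, vsub_eq_sub]
  have hA2 : EuclideanGeometry.angle zj zi zk = InnerProductGeometry.angle (w - u) (-u) := by
    rw [EuclideanGeometry.angle, vsub_eq_sub, vsub_eq_sub]
    congr 1 <;> [skip; skip] <;> ring
  have hrad : (inner ℝ u u * inner ℝ w w - inner ℝ u w * inner ℝ u w : ℝ)
      = inner ℝ (w-u) (w-u) * inner ℝ (-u) (-u) - inner ℝ (w-u) (-u) * inner ℝ (w-u) (-u) := by
    simp only [inner_sub_left, inner_sub_right, inner_neg_left, inner_neg_right,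
      real_inner_comm w u]
    ring
  have h1 := InnerProductGeometry.sin_angle_mul_norm_mul_norm u w
  have h2 := InnerProductGeometry.sin_angle_mul_norm_mul_norm (w - u) (-u)
  rw [← hrad] at h2
  rw [← h1] at h2
  have hun : ‖u‖ ≠ 0 := by
    simp [hu, sub_eq_zero, hik]
  have key : Real.sin (InnerProductGeometry.angle u w) * ‖w‖
      = Real.sin (InnerProductGeometry.angle (w-u) (-u)) * ‖w - u‖ := by
    apply mul_right_cancel₀ hun
    rw [norm_neg] at h2
    linear_combination -h2
  rw [hA1, hA2]
  have hwju : zj - zi = w - u := by ring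
  rw [hwju, key]


lemma arith_t_bound (ε β t a b : ℝ) (hε0 : 0 < ε) (hε1 : ε ≤ 1) (hβ : 0 < β) (ht : 0 < t)
    (ha : 0 < a) (hb : 0 < b) (ha_le : a ≤ 2*(β + t)) (hb_le : b ≤ 2*β)
    (ht2 : t^2 ≤ (ε/30)^2 * (a*b)) : t ≤ ε*β/10 := by
  have hab_le : a*b ≤ (2*(β+t)) * (2*β) :=
    mul_le_mul ha_le hb_le hb.le (by nlinarith)
  have hε2 : ε^2 ≤ 1 := by nlinarith
  have step1 : (ε/30)^2 * (a*b) ≤ (1/900) * (a*b) := by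
    nlinarith [mul_pos ha hb, hε2]
  have ht2' : t^2 ≤ (1/900) * ((2*(β+t)) * (2*β)) := by
    nlinarith [step1, ht2, hab_le]
  have htb : t ≤ β := by nlinarith [mul_pos ht hβ]
  have hab8 : a*b ≤ 8*β^2 := by
    have h1 : β + t ≤ 2*β := by linarith
    nlinarith [hab_le, mul_le_mul_of_nonneg_right h1 (by positivity : (0:ℝ) ≤ 4*β)]
  have h8 : t^2 ≤ (8/900) * (ε^2 * β^2) := by
    have h2 : (ε/30)^2 * (a*b) ≤ (ε/30)^2 * (8*β^2) :=
      mul_le_mul_of_nonneg_left hab8 (by positivity)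
    have heq : (ε/30)^2 * (8*β^2) = (8/900) * (ε^2 * β^2) := by ring
    linarith [ht2, h2]
  nlinarith [mul_pos hε0 hβ, h8, ht]

lemma arith_sin_half (ε s : ℝ) (hε0 : 0 < ε) (hε1 : ε ≤ 1) (h2 : ε/2 - (ε/2)^3/4 < s) :
    ε/4 ≤ s := by nlinarith [sq_nonneg ε]

lemma arith_sin_full (ε s : ℝ) (hε0 : 0 < ε) (hε1 : ε ≤ 1) (h2 : ε - ε^3/4 < s) :
    ε/4 ≤ s := by nlinarith [sq_nonneg ε]

lemma arith_sinelaw (ε u t sa si : ℝ) (hu : 0 < u) (ht : 0 < t) (hsin : sa * u = si * t)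
    (hsa : ε/4 ≤ sa) (hsi : si ≤ 1) : ε * u ≤ 4 * t := by nlinarith

lemma arith_sq (ε u t : ℝ) (hu : 0 < u) (ht : 0 < t) (hε0 : 0 < ε) (h : ε * u ≤ 4 * t) :
    ε^2 * u^2 ≤ 16 * t^2 := by nlinarith [mul_pos hε0 hu]

lemma arith_main (ε u t a b c β : ℝ) (hε0 : 0 < ε) (hβ : 0 < β) (hb : 0 < b)
    (hεu2 : ε^2 * u^2 ≤ 16 * t^2) (ha2 : a ≤ (11/5)*β) (hc : (3/5)*β ≤ c) (ha : 0 < a) :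
    u^2 * (ε^2*(a*b)) ≤ 1024 * t^2 * (b*c) := by
  have s2 : ε^2*u^2*(a*b) ≤ 16*t^2*(a*b) :=
    mul_le_mul_of_nonneg_right hεu2 (by positivity)
  have s3 : 16*t^2*(a*b) ≤ 16*t^2*((11/5)*β*b) := by
    apply mul_le_mul_of_nonneg_left _ (by positivity)
    exact mul_le_mul_of_nonneg_right ha2 hb.le
  have s4 : 1024*t^2*(b*((3/5)*β)) ≤ 1024*t^2*(b*c) := by
    apply mul_le_mul_of_nonneg_left _ (by positivity)
    exact mul_le_mul_of_nonneg_left hc hb.le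
  nlinarith [s2, s3, s4, mul_nonneg (mul_nonneg (sq_nonneg t) hβ.le) hb.le]


lemma pos_one_sub_sq (r : ℝ) (h0 : 0 ≤ r) (h1 : r < 1) : 0 < 1 - r^2 := by nlinarith

lemma arith_sinh30 (ε x : ℝ) (hε0 : 0 < ε) (hε1 : ε ≤ 1) (hx : x ≤ Real.sinh (ε/32)) :
    x ≤ ε/30 := by
  have h3 : Real.sinh (ε/32) ≤ (ε/32)/(1 - ε/32) :=
    sinh_le_div' _ (by positivity) (by linarith)
  have h4 : (ε/32)/(1 - ε/32) ≤ ε/30 := by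
    rw [div_le_div_iff₀ (by linarith) (by norm_num)]
    nlinarith
  linarith

lemma arith_a_le (ra rb t : ℝ) (h0 : 0 ≤ ra) (h1 : ra ≤ 1) (h2 : rb - ra ≤ t) :
    1 - ra^2 ≤ 2*((1 - rb) + t) := by nlinarith

lemma arith_b_le (r : ℝ) (h0 : 0 ≤ r) (h1 : r ≤ 1) : 1 - r^2 ≤ 2*(1-r) := by nlinarith

lemma arith_b_ge (r : ℝ) (h0 : 0 ≤ r) (h1 : r ≤ 1) : 1 - r ≤ 1 - r^2 := by nlinarith

lemma arith_c_ge (rb rc u : ℝ) (h0 : 0 ≤ rc) (h1 : rc < 1) (h2 : rc - rb ≤ u)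
    (h3 : u ≤ (2/5)*(1-rb)) : (3/5)*(1-rb) ≤ 1 - rc^2 := by nlinarith

lemma arith_a_le2 (ε β t a : ℝ) (hε0 : 0 < ε) (hε1 : ε ≤ 1) (hβ : 0 < β)
    (ha : a ≤ 2*(β + t)) (ht : t ≤ ε*β/10) : a ≤ (11/5)*β := by nlinarith

set_option maxHeartbeats 2000000 in
theorem hyperbolic_side_bound (ε : ℝ) (hε : ε ∈ Set.Ioc (0:ℝ) 1)
    (zi zj zk : ℂ)
    (hi : ‖zi‖ < 1) (hj : ‖zj‖ < 1) (hk : ‖zk‖ < 1)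
    (hAi : ε / 2 ≤ EuclideanGeometry.angle zj zi zk)
    (hAj : ε / 2 ≤ EuclideanGeometry.angle zi zj zk)
    (hAk : ε / 2 ≤ EuclideanGeometry.angle zi zk zj)
    (hd : hypDist zi zj ≤ ε / 16)
    (hle : ‖zi‖ ≤ ‖zj‖) :
    hypDist zj zk ≤ (32 / ε) * hypDist zi zj ∧ (32 / ε) * hypDist zi zj ≤ 2 := by
  obtain ⟨hε0, hε1⟩ := hε
  have hd0 : 0 ≤ hypDist zi zj := by
    unfold hypDist
    have : 0 ≤ Real.arsinh (‖zi - zj‖ /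
        Real.sqrt ((1 - ‖zi‖ ^ 2) * (1 - ‖zj‖ ^ 2))) :=
      Real.arsinh_nonneg_iff.2 (by positivity)
    linarith
  have hpart2 : (32 / ε) * hypDist zi zj ≤ 2 := by
    have h1 : (32/ε) * hypDist zi zj ≤ (32/ε) * (ε/16) :=
      mul_le_mul_of_nonneg_left hd (by positivity)
    have h2 : (32/ε) * (ε/16) = 2 := by field_simp; ring
    linarith
  refine ⟨?_, hpart2⟩
  -- degenerate cases
  by_cases hij : zi = zj
  · by_cases hjk : zj = zk
    · have : hypDist zj zk = 0 := by
        simp [hypDist, hjk, Real.arsinh_zero]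
      rw [this]
      positivity
    · exfalso
      have hzero : EuclideanGeometry.angle zi zk zj = 0 := by
        rw [hij, EuclideanGeometry.angle]
        exact InnerProductGeometry.angle_self (sub_ne_zero.2 hjk)
      rw [hzero] at hAk
      linarith
  have hjk : zj ≠ zk := by
    intro h
    have hzero : EuclideanGeometry.angle zj zi zk = 0 := by
      rw [← h, EuclideanGeometry.angle]
      exact InnerProductGeometry.angle_self (sub_ne_zero.2 (Ne.symm hij))
    rw [hzero] at hAi
    linarith
  have hik : zi ≠ zk := by
    intro h
    have hzero : EuclideanGeometry.angle zi zj zk = 0 := by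
      rw [← h, EuclideanGeometry.angle]
      exact InnerProductGeometry.angle_self (sub_ne_zero.2 hij)
    rw [hzero] at hAj
    linarith
  -- notation
  obtain ⟨ra, hra⟩ : ∃ x, x = ‖zi‖ := ⟨_, rfl⟩
  obtain ⟨rb, hrb⟩ : ∃ x, x = ‖zj‖ := ⟨_, rfl⟩
  obtain ⟨rc, hrc⟩ : ∃ x, x = ‖zk‖ := ⟨_, rfl⟩
  obtain ⟨t, htdef⟩ : ∃ x, x = ‖zi - zj‖ := ⟨_, rfl⟩
  obtain ⟨u, hudef⟩ : ∃ x, x = ‖zj - zk‖ := ⟨_, rfl⟩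
  obtain ⟨a, hadef⟩ : ∃ x, x = 1 - ra^2 := ⟨_, rfl⟩
  obtain ⟨b, hbdef⟩ : ∃ x, x = 1 - rb^2 := ⟨_, rfl⟩
  obtain ⟨c, hcdef⟩ : ∃ x, x = 1 - rc^2 := ⟨_, rfl⟩
  obtain ⟨β, hβdef⟩ : ∃ x, x = 1 - rb := ⟨_, rfl⟩
  rw [← hra] at hi hle
  rw [← hrb] at hj hle
  rw [← hrc] at hk
  have hra0 : 0 ≤ ra := hra ▸ norm_nonneg zi
  have hrb0 : 0 ≤ rb := hrb ▸ norm_nonneg zj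
  have hrc0 : 0 ≤ rc := hrc ▸ norm_nonneg zk
  have hapos : 0 < a := hadef ▸ pos_one_sub_sq ra hra0 hi
  have hbpos : 0 < b := hbdef ▸ pos_one_sub_sq rb hrb0 hj
  have hcpos : 0 < c := hcdef ▸ pos_one_sub_sq rc hrc0 hk
  have hβpos : 0 < β := by rw [hβdef]; linarith
  have htpos : 0 < t := htdef ▸ norm_pos_iff.2 (sub_ne_zero.2 hij)
  have hupos : 0 < u := hudef ▸ norm_pos_iff.2 (sub_ne_zero.2 hjk)
  obtain ⟨sab, hsabdef⟩ : ∃ x, x = Real.sqrt (a * b) := ⟨_, rfl⟩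
  obtain ⟨sbc, hsbcdef⟩ : ∃ x, x = Real.sqrt (b * c) := ⟨_, rfl⟩
  have hsabpos : 0 < sab := hsabdef ▸ Real.sqrt_pos.2 (mul_pos hapos hbpos)
  have hsbcpos : 0 < sbc := hsbcdef ▸ Real.sqrt_pos.2 (mul_pos hbpos hcpos)
  have hsab2 : sab^2 = a * b := by rw [hsabdef]; exact Real.sq_sqrt (mul_pos hapos hbpos).le
  have hsbc2 : sbc^2 = b * c := by rw [hsbcdef]; exact Real.sq_sqrt (mul_pos hbpos hcpos).le
  obtain ⟨Sij, hSijdef⟩ : ∃ x, x = t / sab := ⟨_, rfl⟩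
  obtain ⟨Sjk, hSjkdef⟩ : ∃ x, x = u / sbc := ⟨_, rfl⟩
  have hSijpos : 0 < Sij := hSijdef ▸ div_pos htpos hsabpos
  have hSjkpos : 0 < Sjk := hSjkdef ▸ div_pos hupos hsbcpos
  have hDij : hypDist zi zj = 2 * Real.arsinh Sij := by
    rw [hypDist, hSijdef, htdef, hsabdef, hadef, hbdef, hra, hrb]
  have hDjk : hypDist zj zk = 2 * Real.arsinh Sjk := by
    rw [hypDist, hSjkdef, hudef, hsbcdef, hbdef, hcdef, hrb, hrc]
  -- bound on Sij
  have hSij1 : Real.arsinh Sij ≤ ε/32 := by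
    rw [hDij] at hd; linarith
  have hSij2 : Sij ≤ Real.sinh (ε/32) := by
    have := Real.sinh_le_sinh.2 hSij1
    rwa [Real.sinh_arsinh] at this
  have hSij3 : Sij ≤ ε/30 := arith_sinh30 ε Sij hε0 hε1 hSij2
  have ht_eq : t = Sij * sab := by
    rw [hSijdef]; field_simp
  -- geometric bounds
  have habs1 : rb - ra ≤ t := by
    rw [hra, hrb, htdef,
      norm_sub_rev]
    exact norm_sub_norm_le zj zi
  have habs2 : rc - rb ≤ u := by
    rw [hrb, hrc, hudef,
      norm_sub_rev]
    exact norm_sub_norm_le zk zj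
  have ha_le : a ≤ 2*(β + t) := by
    rw [hadef, hβdef]; exact arith_a_le ra rb t hra0 hi.le habs1
  have hb_le : b ≤ 2*β := by rw [hbdef, hβdef]; exact arith_b_le rb hrb0 hj.le
  have hb_ge : β ≤ b := by rw [hbdef, hβdef]; exact arith_b_ge rb hrb0 hj.le
  have ht2 : t^2 ≤ (ε/30)^2 * (a*b) := by
    have e : t^2 = Sij^2 * (a*b) := by rw [ht_eq, mul_pow, hsab2]
    rw [e]
    have hS2 : Sij^2 ≤ (ε/30)^2 := pow_le_pow_left₀ hSijpos.le hSij3 2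
    exact mul_le_mul_of_nonneg_right hS2 (by positivity)
  have htεβ : t ≤ ε*β/10 :=
    arith_t_bound ε β t a b hε0 hε1 hβpos htpos hapos hbpos ha_le hb_le ht2
  -- angle bounds
  have hsum := EuclideanGeometry.angle_add_angle_add_angle_eq_pi
    (p₁ := zi) (p₂ := zj) (p₃ := zk) (Ne.symm hij)
  rw [EuclideanGeometry.angle_comm zj zk zi, EuclideanGeometry.angle_comm zk zi zj] at hsum
  -- hsum : ∠ zi zj zk + ∠ zi zk zj + ∠ zj zi zk = π
  have hpi3 : (3:ℝ) < Real.pi := Real.pi_gt_three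
  have hAknn : 0 ≤ EuclideanGeometry.angle zi zk zj := EuclideanGeometry.angle_nonneg _ _ _
  have hsinAk : ε/4 ≤ Real.sin (EuclideanGeometry.angle zi zk zj) := by
    by_cases hcase : EuclideanGeometry.angle zi zk zj ≤ Real.pi/2
    · have h1 : Real.sin (ε/2) ≤ Real.sin (EuclideanGeometry.angle zi zk zj) :=
        Real.sin_le_sin_of_le_of_le_pi_div_two (by linarith) hcase hAk
      have h2 := Real.sin_gt_sub_cube (by linarith : (0:ℝ) < ε/2)
      exact arith_sin_half ε _ hε0 hε1 (by linarith [h1, h2, pow_pos hε0 3])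
    · push_neg at hcase
      have hπsub : Real.sin (EuclideanGeometry.angle zi zk zj)
          = Real.sin (EuclideanGeometry.angle zi zj zk + EuclideanGeometry.angle zj zi zk) := by
        have : EuclideanGeometry.angle zi zk zj
            = Real.pi - (EuclideanGeometry.angle zi zj zk + EuclideanGeometry.angle zj zi zk) := by
          linarith [hsum]
        rw [this, Real.sin_pi_sub]
      have hsle : EuclideanGeometry.angle zi zj zk + EuclideanGeometry.angle zj zi zk
          ≤ Real.pi/2 := by linarith [hsum]
      have h1 : Real.sin ε ≤ Real.sin (EuclideanGeometry.angle zi zj zk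
          + EuclideanGeometry.angle zj zi zk) :=
        Real.sin_le_sin_of_le_of_le_pi_div_two (by linarith) hsle (by linarith [hAi, hAj])
      have h2 := Real.sin_gt_sub_cube hε0
      rw [hπsub]
      exact arith_sin_full ε _ hε0 hε1 (by linarith [h1, h2, pow_pos hε0 3])
  -- sine law
  have hsin := sine_law' zi zj zk hik
  rw [← hudef] at hsin
  have habsc : ‖zj - zi‖ = t := by
    rw [htdef, norm_sub_rev]
  rw [habsc] at hsin
  have hεu : ε * u ≤ 4 * t :=
    arith_sinelaw ε u t _ _ hupos htpos hsin hsinAk (Real.sin_le_one _)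
  have hu25 : u ≤ (2/5)*β := by
    rw [← mul_le_mul_iff_right₀ hε0]
    linarith [hεu, htεβ]
  have hc_ge : (3/5)*β ≤ c := by
    rw [hcdef, hβdef]
    rw [hβdef] at hu25
    exact arith_c_ge rb rc u hrc0 hk habs2 hu25
  have ha_le2 : a ≤ (11/5)*β := arith_a_le2 ε β t a hε0 hε1 hβpos ha_le htεβ
  have hεu2 : ε^2 * u^2 ≤ 16 * t^2 := arith_sq ε u t hupos htpos hε0 hεu
  have hmain : u^2 * (ε^2*(a*b)) ≤ 1024 * t^2 * (b*c) :=
    arith_main ε u t a b c β hε0 hβpos hbpos hεu2 ha_le2 hc_ge hapos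
  have hRpos : 0 < (32/ε) * Sij := by positivity
  have hkey : Sjk ≤ (32/ε) * Sij := by
    have e1 : Sjk^2 = u^2/(b*c) := by rw [hSjkdef, div_pow, hsbc2]
    have e2 : ((32/ε)*Sij)^2 = (1024*t^2)/(ε^2*(a*b)) := by
      rw [hSijdef, mul_pow, div_pow, div_pow, hsab2]
      field_simp
      ring
    have hsq : Sjk^2 ≤ ((32/ε)*Sij)^2 := by
      rw [e1, e2, div_le_div_iff₀ (mul_pos hbpos hcpos) (by positivity)]
      linarith [hmain]
    have := Real.sqrt_le_sqrt hsq
    rwa [Real.sqrt_sq hSjkpos.le, Real.sqrt_sq hRpos.le] at this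
  have h32 : (1:ℝ) ≤ 32/ε := by rw [le_div_iff₀ hε0]; linarith
  calc hypDist zj zk = 2 * Real.arsinh Sjk := hDjk
    _ ≤ 2 * Real.arsinh ((32/ε) * Sij) := by
        have := Real.arsinh_le_arsinh.2 hkey; linarith
    _ ≤ 2 * ((32/ε) * Real.arsinh Sij) := by
        have := arsinh_mul_le' Sij (32/ε) hSijpos.le h32; linarith
    _ = (32/ε) * hypDist zi zj := by rw [hDij]; ring
end

section
/- Let ε ∈ (0,1]. Suppose positive reals l_ij, l_jk, l_ik, l'_ij, l'_jk, l'_ik satisfy: l_ij ≤ ε³/8192, l_ik ≤ ε³/8192 ≤ 1, l_jk ≥ l_ik·sin ε (hyperbolic triangle with angles ≥ ε gives sinh l_jk ≥ sinh l_ik · sin ε), l'_ik ≥ ε/16, l'_ik ≤ 2, l'_jk ≤ (32/ε) l'_ij, and l'_jk ≤ 2. Then (sinh(l'_ij/2)/sinh(l_ij/2)) · (sinh(l'_ik/2)/sinh(l_ik/2)) / (sinh(l'_jk/2)/sinh(l_jk/2)) ≥ ε³/(8192·l_ij) ≥ 1. -/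
lemma sinh_le_two_mul {x : ℝ} (hx : 0 ≤ x) (hx1 : x ≤ 1) : Real.sinh x ≤ 2 * x := by
  have hb1 : 1 - x ≤ Real.exp (-x) := by
    have := Real.add_one_le_exp (-x); linarith
  have hb2 : Real.exp (-x) ≤ 1 := Real.exp_le_one_iff.mpr (by linarith)
  have ha : Real.exp x ≤ 3 := by
    calc Real.exp x ≤ Real.exp 1 := Real.exp_le_exp.mpr hx1
    _ ≤ 3 := by have := Real.exp_one_lt_d9; linarith
  have hab : Real.exp x * Real.exp (-x) = 1 := by
    rw [← Real.exp_add]; simp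
  have hbpos : 0 < Real.exp (-x) := Real.exp_pos _
  rw [Real.sinh_eq]
  nlinarith [mul_nonneg (by linarith : (0:ℝ) ≤ 1 - Real.exp (-x))
    (by linarith : (0:ℝ) ≤ 3 - Real.exp x)]

theorem contradiction_estimate (ε : ℝ) (hε : ε ∈ Set.Ioc (0:ℝ) 1)
    (lij ljk lik lij' ljk' lik' : ℝ)
    (hij : 0 < lij) (hjk : 0 < ljk) (hik : 0 < lik)
    (hij' : 0 < lij') (hjk' : 0 < ljk') (hik' : 0 < lik')
    (h1 : lij ≤ ε ^ 3 / 8192) (h2 : lik ≤ ε ^ 3 / 8192) (h3 : ε ^ 3 / 8192 ≤ 1)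
    (h4 : ljk ≥ lik * Real.sin ε)
    (h5 : lik' ≥ ε / 16) (h6 : lik' ≤ 2)
    (h7 : ljk' ≤ (32 / ε) * lij') (h8 : ljk' ≤ 2) :
    (Real.sinh (lij' / 2) / Real.sinh (lij / 2))
      * (Real.sinh (lik' / 2) / Real.sinh (lik / 2))
      / (Real.sinh (ljk' / 2) / Real.sinh (ljk / 2))
      ≥ ε ^ 3 / (8192 * lij) ∧ ε ^ 3 / (8192 * lij) ≥ 1 := by
  obtain ⟨hε0, hε1⟩ := hε
  have hsin : Real.sin ε ≥ ε / 2 := by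
    have := Real.sin_gt_sub_cube hε0
    have hε2 : ε ^ 3 ≤ ε := by nlinarith [mul_nonneg (mul_nonneg hε0.le hε0.le) (by linarith : (0:ℝ) ≤ 1 - ε), mul_nonneg hε0.le (by linarith : (0:ℝ) ≤ 1 - ε)]
    linarith
  have hsinpos : 0 < Real.sin ε := lt_of_lt_of_le (by positivity) hsin
  -- positivity of the various sinh's
  have sij : 0 < Real.sinh (lij / 2) := Real.sinh_pos_iff.mpr (by linarith)
  have sjk : 0 < Real.sinh (ljk / 2) := Real.sinh_pos_iff.mpr (by linarith)
  have sik : 0 < Real.sinh (lik / 2) := Real.sinh_pos_iff.mpr (by linarith)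
  have sij' : 0 < Real.sinh (lij' / 2) := Real.sinh_pos_iff.mpr (by linarith)
  have sjk' : 0 < Real.sinh (ljk' / 2) := Real.sinh_pos_iff.mpr (by linarith)
  have sik' : 0 < Real.sinh (lik' / 2) := Real.sinh_pos_iff.mpr (by linarith)
  -- elementary sinh bounds
  have bij : Real.sinh (lij / 2) ≤ lij :=
    le_trans (sinh_le_two_mul (by linarith) (by linarith)) (by linarith)
  have bik : Real.sinh (lik / 2) ≤ lik :=
    le_trans (sinh_le_two_mul (by linarith) (by linarith)) (by linarith)
  have bjk' : Real.sinh (ljk' / 2) ≤ (32 / ε) * lij' :=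
    le_trans (le_trans (sinh_le_two_mul (by linarith) (by linarith)) (by linarith)) h7
  have bij' : lij' / 2 ≤ Real.sinh (lij' / 2) :=
    Real.self_le_sinh_iff.mpr (by linarith)
  have bik' : ε / 32 ≤ Real.sinh (lik' / 2) :=
    le_trans (by linarith) (Real.self_le_sinh_iff.mpr (by linarith) : lik' / 2 ≤ _)
  have bjk : lik * Real.sin ε / 2 ≤ Real.sinh (ljk / 2) :=
    le_trans (by linarith) (Real.self_le_sinh_iff.mpr (by linarith) : ljk / 2 ≤ _)
  have h32 : (0:ℝ) < (32 / ε) * lij' := by positivity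
  constructor
  · rw [ge_iff_le]
    calc ε ^ 3 / (8192 * lij)
        ≤ (lij' / 2 / lij) * ((ε / 32) / lik) / (((32 / ε) * lij') / (lik * Real.sin ε / 2)) := by
          have heq : (lij' / 2 / lij) * ((ε / 32) / lik) / (((32 / ε) * lij') / (lik * Real.sin ε / 2))
              = ε ^ 2 * Real.sin ε / (4096 * lij) := by
            field_simp
            ring
          rw [heq, div_le_div_iff₀ (by positivity) (by positivity)]
          nlinarith [mul_nonneg (mul_nonneg (sq_nonneg ε) hij.le)
            (by linarith : (0:ℝ) ≤ 2 * Real.sin ε - ε)]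
      _ ≤ _ := by
          gcongr
  · rw [ge_iff_le, le_div_iff₀ (by positivity)]
    linarith
end
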